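/- Let M, ν ∈ ℕ with ν ≤ M, let 0 < ε < 1, let X ⊆ EuclideanSpace ℝ (Fin M) be a convex set, and let W : EuclideanSpace ℝ (Fin M) → ℝ be twice continuously differentiable such that for every a ∈ X and every v, |iteratedDeriv 2 (t ↦ W(a + t • v)) 0 − Q(v)| ≤ ε‖v‖², where Q(v) = ∑_{i < ν} (v i)² − ∑_{ν ≤ i < M} (v i)². Then for every set Ξ ⊆ X that is W-convex (i.e. W(t·a₁ + (1−t)·a₂) ≤ t·W(a₁) + (1−t)·W(a₂) for all a₁, a₂ ∈ Ξ and t ∈ [0,1]), the Hausdorff dimension of Ξ satisfies dimH Ξ ≤ ν. -/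

import Mathlib

open scoped ENNReal

lemma aux_second_diff_le {g : ℝ → ℝ} (hg : ContDiff ℝ 2 g) {c : ℝ}
    (hc : ∀ s ∈ Set.Icc (0:ℝ) 1, deriv (deriv g) s ≤ c) :
    g 0 + g 1 - 2 * g (1/2) ≤ c / 4 := by
  have hgd : Differentiable ℝ g := hg.differentiable (by norm_num)
  have hg1 : ContDiff ℝ 1 (deriv g) := by
    have h2 : ContDiff ℝ (1 + 1) g := by exact_mod_cast hg
    exact (contDiff_succ_iff_deriv.mp h2).2.2
  have hgd' : Differentiable ℝ (deriv g) := hg1.differentiable (by norm_num)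
  set φ : ℝ → ℝ := fun t => g t - c / 2 * t ^ 2 with hφdef
  have hq : ∀ t : ℝ, HasDerivAt (fun t : ℝ => c / 2 * t ^ 2) (c * t) t := by
    intro t
    have := (hasDerivAt_pow 2 t).const_mul (c / 2)
    refine this.congr_deriv ?_
    push_cast; ring
  have hq2 : ∀ t : ℝ, HasDerivAt (fun t : ℝ => c * t) c t := fun t => by
    simpa using (hasDerivAt_id t).const_mul c
  have hφ' : deriv φ = fun t => deriv g t - c * t := by
    funext t
    exact (((hgd t).hasDerivAt).sub (hq t)).deriv
  have hφ'' : ∀ t, deriv (deriv φ) t = deriv (deriv g) t - c := by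
    intro t
    rw [hφ']
    exact (((hgd' t).hasDerivAt).sub (hq2 t)).deriv
  have hconc : ConcaveOn ℝ (Set.Icc (0:ℝ) 1) φ := by
    apply concaveOn_of_deriv2_nonpos' (convex_Icc 0 1)
    · intro x _
      exact ((hgd x).sub (hq x).differentiableAt).differentiableWithinAt
    · intro x _
      rw [hφ']
      exact ((hgd' x).sub (hq2 x).differentiableAt).differentiableWithinAt
    · intro x hx
      have h2 : deriv^[2] φ x = deriv (deriv φ) x := rfl
      rw [h2, hφ'' x]
      linarith [hc x hx]
  have h := hconc.2 (Set.mem_Icc.mpr ⟨le_refl 0, zero_le_one⟩)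
    (Set.mem_Icc.mpr ⟨zero_le_one, le_refl 1⟩)
    (by norm_num : (0:ℝ) ≤ 1/2) (by norm_num : (0:ℝ) ≤ 1/2) (by norm_num)
  simp only [smul_eq_mul, hφdef] at h
  norm_num at h
  linarith

lemma aux_key {M ν : ℕ} {ε : ℝ}
    {X : Set (EuclideanSpace ℝ (Fin M))} (hX : Convex ℝ X)
    {W : EuclideanSpace ℝ (Fin M) → ℝ} (hW : ContDiff ℝ 2 W)
    (hHess : ∀ a ∈ X, ∀ v : EuclideanSpace ℝ (Fin M),
      |iteratedDeriv 2 (fun t : ℝ => W (a + t • v)) 0 -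
          (∑ i : Fin M, if (i : ℕ) < ν then v i ^ 2 else -(v i ^ 2))| ≤ ε * ‖v‖ ^ 2)
    {a₁ a₂ : EuclideanSpace ℝ (Fin M)} (h₁ : a₁ ∈ X) (h₂ : a₂ ∈ X)
    (hmid : W ((1/2 : ℝ) • a₁ + (1 - (1/2 : ℝ)) • a₂) ≤ (1/2) * W a₁ + (1 - (1/2)) * W a₂) :
    0 ≤ (∑ i : Fin M, if (i : ℕ) < ν then (a₂ - a₁) i ^ 2 else -((a₂ - a₁) i ^ 2))
        + ε * ‖a₂ - a₁‖ ^ 2 := by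
  set v : EuclideanSpace ℝ (Fin M) := a₂ - a₁ with hvdef
  set c : ℝ := (∑ i : Fin M, if (i : ℕ) < ν then v i ^ 2 else -(v i ^ 2)) + ε * ‖v‖ ^ 2 with hcdef
  set g : ℝ → ℝ := fun t => W (a₁ + t • v) with hgdef
  have hg : ContDiff ℝ 2 g := by
    apply hW.comp
    exact contDiff_const.add (contDiff_id.smul contDiff_const)
  have hder : ∀ s ∈ Set.Icc (0:ℝ) 1, deriv (deriv g) s ≤ c := by
    intro s hs
    have hmem : a₁ + s • v ∈ X := by
      have := hX h₁ h₂ (sub_nonneg.mpr hs.2) hs.1 (by ring)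
      have heq : (1 - s) • a₁ + s • a₂ = a₁ + s • v := by
        rw [hvdef]; module
      rwa [heq] at this
    have hshift : deriv (deriv g) s
        = iteratedDeriv 2 (fun t : ℝ => W ((a₁ + s • v) + t • v)) 0 := by
      have h1 : deriv (deriv g) s = iteratedDeriv 2 g s := by
        rw [iteratedDeriv_succ, iteratedDeriv_one]
      have h2 : (fun z : ℝ => g (s + z)) = fun t : ℝ => W ((a₁ + s • v) + t • v) := by
        funext z
        show W (a₁ + (s + z) • v) = W ((a₁ + s • v) + z • v)
        congr 1
        module
      rw [h1, ← h2, iteratedDeriv_comp_const_add]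
      norm_num
    have hh := hHess (a₁ + s • v) hmem v
    rw [← hshift] at hh
    have habs := abs_le.mp hh
    rw [hcdef]
    linarith [habs.2]
  have hsecond := aux_second_diff_le hg hder
  have hg0 : g 0 = W a₁ := by
    show W (a₁ + (0:ℝ) • v) = W a₁
    rw [zero_smul, add_zero]
  have hg1 : g 1 = W a₂ := by
    show W (a₁ + (1:ℝ) • v) = W a₂
    congr 1
    rw [hvdef]; module
  have hgh : g (1/2) = W ((1/2 : ℝ) • a₁ + (1 - (1/2 : ℝ)) • a₂) := by
    show W (a₁ + (1/2 : ℝ) • v) = _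
    congr 1
    rw [hvdef]; module
  have hnn : 0 ≤ g 0 + g 1 - 2 * g (1/2) := by
    rw [hg0, hg1, hgh]
    norm_num at hmid ⊢
    linarith
  linarith

/-- Hausdorff dimension bound for W-convex sets (local Frostman-type bound): if on a convex
set `X` the second derivative of `W` along every direction `v` is within `ε‖v‖²` of the
quadratic form with `ν` eigenvalues `+1` and `M − ν` eigenvalues `−1`, then every W-convex
subset `Ξ ⊆ X` has Hausdorff dimension at most `ν`. -/
theorem hausdorff_dimension_bound_of_wConvex
    (M ν : ℕ) (hν : ν ≤ M) (ε : ℝ) (hε0 : 0 < ε) (hε1 : ε < 1)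
    (X : Set (EuclideanSpace ℝ (Fin M))) (hX : Convex ℝ X)
    (W : EuclideanSpace ℝ (Fin M) → ℝ) (hW : ContDiff ℝ 2 W)
    (hHess : ∀ a ∈ X, ∀ v : EuclideanSpace ℝ (Fin M),
      |iteratedDeriv 2 (fun t : ℝ => W (a + t • v)) 0 -
          (∑ i : Fin M, if (i : ℕ) < ν then v i ^ 2 else -(v i ^ 2))| ≤ ε * ‖v‖ ^ 2)
    (Ξ : Set (EuclideanSpace ℝ (Fin M))) (hΞX : Ξ ⊆ X)
    (hconv : ∀ a₁ ∈ Ξ, ∀ a₂ ∈ Ξ, ∀ t ∈ Set.Icc (0 : ℝ) 1,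
      W (t • a₁ + (1 - t) • a₂) ≤ t * W a₁ + (1 - t) * W a₂) :
    dimH Ξ ≤ (ν : ℝ≥0∞) := by
  set π : EuclideanSpace ℝ (Fin M) → EuclideanSpace ℝ (Fin ν) :=
    fun a => WithLp.toLp 2 (fun j => a (Fin.castLE hν j)) with hπdef
  have h1ε : (0:ℝ) < 1 - ε := by linarith
  have normsq : ∀ v : EuclideanSpace ℝ (Fin M), ‖v‖ ^ 2 = ∑ i : Fin M, v i ^ 2 := by
    intro v
    rw [EuclideanSpace.norm_eq, Real.sq_sqrt (by positivity)]
    congr 1; funext i; rw [Real.norm_eq_abs, sq_abs]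
  have normsqF : ∀ w : EuclideanSpace ℝ (Fin ν), ‖w‖ ^ 2 = ∑ j : Fin ν, w j ^ 2 := by
    intro w
    rw [EuclideanSpace.norm_eq, Real.sq_sqrt (by positivity)]
    congr 1; funext i; rw [Real.norm_eq_abs, sq_abs]
  have key : ∀ a₁ ∈ Ξ, ∀ a₂ ∈ Ξ,
      ‖a₂ - a₁‖ ^ 2 ≤ (2 / (1 - ε)) * ‖π a₂ - π a₁‖ ^ 2 := by
    intro a₁ h₁ a₂ h₂
    have hQ := aux_key hX hW hHess (hΞX h₁) (hΞX h₂)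
      (hconv a₁ h₁ a₂ h₂ (1/2) (Set.mem_Icc.mpr ⟨by norm_num, by norm_num⟩))
    set v : EuclideanSpace ℝ (Fin M) := a₂ - a₁ with hvdef
    set S : ℝ := ∑ i : Fin M, v i ^ 2 with hSdef
    set Sp : ℝ := ∑ i : Fin M, (if (i : ℕ) < ν then v i ^ 2 else 0) with hSpdef
    have hsplit : (∑ i : Fin M, if (i : ℕ) < ν then v i ^ 2 else -(v i ^ 2))
        = 2 * Sp - S := by
      rw [hSpdef, hSdef, Finset.mul_sum, ← Finset.sum_sub_distrib]
      apply Finset.sum_congr rfl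
      intro i _
      split <;> ring
    have hS : ‖v‖ ^ 2 = S := normsq v
    have hQ' : (1 - ε) * S ≤ 2 * Sp := by
      rw [hsplit, hS] at hQ
      linarith
    have hπv : ‖π a₂ - π a₁‖ ^ 2 = Sp := by
      rw [normsqF]
      have happ : ∀ j : Fin ν, (π a₂ - π a₁) j = v (Fin.castLE hν j) := fun j => rfl
      rw [Finset.sum_congr rfl fun j _ => by rw [happ j]]
      set u : ℕ → ℝ := fun k => if h : k < M then v ⟨k, h⟩ ^ 2 else 0 with hudef
      have hl : ∑ j : Fin ν, v (Fin.castLE hν j) ^ 2 = ∑ k ∈ Finset.range ν, u k := by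
        rw [← Fin.sum_univ_eq_sum_range]
        apply Finset.sum_congr rfl
        intro j _
        show v (Fin.castLE hν j) ^ 2 = u (j : ℕ)
        rw [hudef]
        simp only []
        rw [dif_pos (lt_of_lt_of_le j.isLt hν)]
        rfl
      have hr : Sp = ∑ k ∈ Finset.range M, (if k < ν then u k else 0) := by
        rw [hSpdef, ← Fin.sum_univ_eq_sum_range]
        apply Finset.sum_congr rfl
        intro i _
        show (if (i:ℕ) < ν then v i ^ 2 else 0) = (if (i:ℕ) < ν then u (i:ℕ) else 0)
        by_cases hi : (i : ℕ) < ν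
        · rw [if_pos hi, if_pos hi, hudef]
          simp only []
          rw [dif_pos i.isLt]
        · rw [if_neg hi, if_neg hi]
      have hsub : ∑ k ∈ Finset.range M, (if k < ν then u k else 0)
          = ∑ k ∈ Finset.range ν, u k := by
        rw [← Finset.sum_subset (Finset.range_subset_range.mpr hν)]
        · apply Finset.sum_congr rfl
          intro k hk
          rw [if_pos (Finset.mem_range.mp hk)]
        · intro k _ hk
          rw [if_neg (fun h => hk (Finset.mem_range.mpr h))]
      rw [hl, hr, hsub]
    rw [hS, hπv]
    rw [div_mul_eq_mul_div, le_div_iff₀ h1ε]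
    linarith
  set K : ℝ := Real.sqrt (2 / (1 - ε)) with hKdef
  have hC : (0:ℝ) ≤ 2 / (1 - ε) := by positivity
  have hdistle : ∀ a₁ ∈ Ξ, ∀ a₂ ∈ Ξ, ‖a₂ - a₁‖ ≤ K * ‖π a₂ - π a₁‖ := by
    intro a₁ h₁ a₂ h₂
    have h := key a₁ h₁ a₂ h₂
    have hKnn : 0 ≤ K * ‖π a₂ - π a₁‖ := by positivity
    have hsq : ‖a₂ - a₁‖ ^ 2 ≤ (K * ‖π a₂ - π a₁‖) ^ 2 := by
      rw [mul_pow, hKdef, Real.sq_sqrt hC]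
      exact h
    calc ‖a₂ - a₁‖ = Real.sqrt (‖a₂ - a₁‖ ^ 2) := (Real.sqrt_sq (norm_nonneg _)).symm
      _ ≤ Real.sqrt ((K * ‖π a₂ - π a₁‖) ^ 2) := Real.sqrt_le_sqrt hsq
      _ = K * ‖π a₂ - π a₁‖ := Real.sqrt_sq hKnn
  set f : EuclideanSpace ℝ (Fin ν) → EuclideanSpace ℝ (Fin M) :=
    Function.invFunOn π Ξ with hfdef
  have hfΞ : ∀ y ∈ π '' Ξ, f y ∈ Ξ ∧ π (f y) = y := by
    intro y hy
    obtain ⟨a, ha, rfl⟩ := hy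
    exact ⟨Function.invFunOn_mem ⟨a, ha, rfl⟩, Function.invFunOn_eq ⟨a, ha, rfl⟩⟩
  have himg : f '' (π '' Ξ) = Ξ := by
    apply Set.Subset.antisymm
    · rintro b ⟨y, hy, rfl⟩
      exact (hfΞ y hy).1
    · intro a ha
      refine ⟨π a, ⟨a, ha, rfl⟩, ?_⟩
      obtain ⟨hb, hbe⟩ := hfΞ (π a) ⟨a, ha, rfl⟩
      have h := hdistle (f (π a)) hb a ha
      rw [hbe, sub_self, norm_zero, mul_zero] at h
      have h0 : a - f (π a) = 0 := by
        rw [← norm_le_zero_iff]; exact h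
      exact (sub_eq_zero.mp h0).symm
  have hlip : LipschitzOnWith (Real.toNNReal K) f (π '' Ξ) := by
    apply LipschitzOnWith.of_dist_le_mul
    intro y₁ hy₁ y₂ hy₂
    obtain ⟨hb₁, he₁⟩ := hfΞ y₁ hy₁
    obtain ⟨hb₂, he₂⟩ := hfΞ y₂ hy₂
    have h := hdistle (f y₂) hb₂ (f y₁) hb₁
    rw [he₁, he₂] at h
    rw [dist_eq_norm, dist_eq_norm]
    calc ‖f y₁ - f y₂‖ ≤ K * ‖y₁ - y₂‖ := h
      _ = Real.toNNReal K * ‖y₁ - y₂‖ := by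
          rw [Real.coe_toNNReal K (Real.sqrt_nonneg _)]
  calc dimH Ξ = dimH (f '' (π '' Ξ)) := by rw [himg]
    _ ≤ dimH (π '' Ξ) := hlip.dimH_image_le
    _ ≤ dimH (Set.univ : Set (EuclideanSpace ℝ (Fin ν))) := dimH_mono (Set.subset_univ _)
    _ = (Module.finrank ℝ (EuclideanSpace ℝ (Fin ν)) : ℝ≥0∞) :=
        Real.dimH_univ_eq_finrank _
    _ = (ν : ℝ≥0∞) := by rw [finrank_euclideanSpace_fin]
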